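/- Let G be a directed graph with disjoint nonempty vertex sets X, Y admitting at least one X–Y separator. Among minimum-size X–Y separators there is a unique separator S* such that the set of vertices reachable from X in G \ S* is inclusion-wise maximal: for every minimum X–Y separator S, R⁺(X, G\S) ⊆ R⁺(X, G\S*). -/

import Mathlib

variable {V : Type*}

/-- A single edge step in `G \ S`: an edge of `E` with both endpoints outside `S`. -/
def DStep (E : V → V → Prop) (S : Set V) (a b : V) : Prop :=
  E a b ∧ a ∉ S ∧ b ∉ S

/-- `b` is reachable from `a` by a directed path in `G \ S`. -/
def DReach (E : V → V → Prop) (S : Set V) (a b : V) : Prop :=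
  Relation.ReflTransGen (DStep E S) a b

/-- The set of vertices reachable from the set `X` in `G \ S`. -/
def RSet (E : V → V → Prop) (S X : Set V) : Set V :=
  {v | ∃ x ∈ X, DReach E S x v}

/-- `S` is an `X`–`Y` separator: disjoint from `X ∪ Y` and destroying all `X → Y` paths. -/
def IsSep (E : V → V → Prop) (X Y S : Set V) : Prop :=
  S ∩ (X ∪ Y) = ∅ ∧ ∀ x ∈ X, ∀ y ∈ Y, ¬ DReach E S x y

/-- `S` is an inclusion-wise minimal `X`–`Y` separator. -/
def IsMinSep (E : V → V → Prop) (X Y S : Set V) : Prop :=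
  IsSep E X Y S ∧ ∀ S', S' ⊂ S → ¬ IsSep E X Y S'

/-- `S` is an important `X`–`Y` separator: a minimal separator such that no separator of at
most the same size has a strictly larger set of vertices reachable from `X`. -/
def IsImpSep (E : V → V → Prop) (X Y S : Set V) : Prop :=
  IsMinSep E X Y S ∧
    ¬ ∃ S', IsSep E X Y S' ∧ S'.ncard ≤ S.ncard ∧ RSet E S X ⊂ RSet E S' X

/-- `S` is a (vertex) multiway cut of `(G, T)`. -/
def IsMWC (E : V → V → Prop) (T S : Set V) : Prop :=
  S ∩ T = ∅ ∧ ∀ t₁ ∈ T, ∀ t₂ ∈ T, t₁ ≠ t₂ → ¬ DReach E S t₁ t₂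

/-- The forward shadow of `S` with respect to `T`: vertices outside `S ∪ T` not reachable
from `T` in `G \ S`. -/
def fShadow (E : V → V → Prop) (T S : Set V) : Set V :=
  {v | v ∉ S ∧ v ∉ T ∧ ∀ t ∈ T, ¬ DReach E S t v}

/-- The reverse shadow of `S` with respect to `T`: vertices outside `S ∪ T` that cannot
reach `T` in `G \ S`. -/
def rShadow (E : V → V → Prop) (T S : Set V) : Set V :=
  {v | v ∉ S ∧ v ∉ T ∧ ∀ t ∈ T, ¬ DReach E S v t}

/-- The adjacency of `torso(G, C)`: an edge `(a, b)` whenever `a, b ∈ C` and `G` has a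
directed `a → b` path whose internal vertices all lie outside `C`. -/
def TorsoAdj (E : V → V → Prop) (C : Set V) (a b : V) : Prop :=
  a ∈ C ∧ b ∈ C ∧ ∃ w, E a w ∧ Relation.ReflTransGen (fun x y => x ∉ C ∧ E x y) w b

/-- The out-border of a vertex set. -/
def Border (E : V → V → Prop) (R : Set V) : Set V :=
  {v | v ∉ R ∧ ∃ u ∈ R, E u v}

lemma subset_RSet {E : V → V → Prop} {S X : Set V} : X ⊆ RSet E S X :=
  fun x hx => ⟨x, hx, Relation.ReflTransGen.refl⟩

lemma RSet_disj {E : V → V → Prop} {S X : Set V} (hSX : S ∩ X = ∅) :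
    ∀ v ∈ RSet E S X, v ∉ S := by
  rintro v ⟨x, hx, hr⟩
  induction hr with
  | refl => exact fun h => (Set.eq_empty_iff_forall_notMem.1 hSX x) ⟨h, hx⟩
  | tail _ step _ => exact step.2.2

lemma sep_inter_X {E : V → V → Prop} {X Y S : Set V} (h : IsSep E X Y S) : S ∩ X = ∅ := by
  have := h.1
  rw [Set.eq_empty_iff_forall_notMem] at this ⊢
  exact fun v hv => this v ⟨hv.1, Or.inl hv.2⟩

lemma sep_inter_Y {E : V → V → Prop} {X Y S : Set V} (h : IsSep E X Y S) : S ∩ Y = ∅ := by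
  have := h.1
  rw [Set.eq_empty_iff_forall_notMem] at this ⊢
  exact fun v hv => this v ⟨hv.1, Or.inr hv.2⟩

lemma RSet_inter_Y {E : V → V → Prop} {X Y S : Set V} (h : IsSep E X Y S) :
    RSet E S X ∩ Y = ∅ := by
  rw [Set.eq_empty_iff_forall_notMem]
  rintro v ⟨⟨x, hx, hr⟩, hvY⟩
  exact h.2 x hx v hvY hr

lemma border_subset_sep {E : V → V → Prop} {X Y S : Set V} (h : IsSep E X Y S) :
    Border E (RSet E S X) ⊆ S := by
  rintro v ⟨hv, u, hu, he⟩
  by_contra hvS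
  exact hv ⟨hu.choose, hu.choose_spec.1,
    hu.choose_spec.2.tail ⟨he, RSet_disj (sep_inter_X h) u hu, hvS⟩⟩

lemma DReach_border_mem {E : V → V → Prop} {R : Set V} {x y : V}
    (hx : x ∈ R) (h : DReach E (Border E R) x y) : y ∈ R := by
  induction h with
  | refl => exact hx
  | tail _ step ih =>
    by_contra hb
    exact step.2.2 ⟨hb, _, ih, step.1⟩

lemma border_isSep {E : V → V → Prop} {X Y R : Set V}
    (hXR : X ⊆ R) (hRY : R ∩ Y = ∅) (hBY : Border E R ∩ Y = ∅) :
    IsSep E X Y (Border E R) := by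
  constructor
  · rw [Set.eq_empty_iff_forall_notMem]
    rintro v ⟨hvB, hvXY⟩
    rcases hvXY with hvX | hvY
    · exact hvB.1 (hXR hvX)
    · exact (Set.eq_empty_iff_forall_notMem.1 hBY v) ⟨hvB, hvY⟩
  · intro x hx y hy hr
    exact (Set.eq_empty_iff_forall_notMem.1 hRY y) ⟨DReach_border_mem (hXR hx) hr, hy⟩

lemma RSet_mono {E : V → V → Prop} {S T X : Set V}
    (h : ∀ v ∈ RSet E S X, v ∉ T) : RSet E S X ⊆ RSet E T X := by
  rintro v ⟨x, hx, hr⟩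
  refine ⟨x, hx, ?_⟩
  induction hr with
  | refl => exact Relation.ReflTransGen.refl
  | @tail b c hr' step ih =>
    exact ih.tail ⟨step.1, h b ⟨x, hx, hr'⟩, h c ⟨x, hx, hr'.tail step⟩⟩

lemma key_lemma [Fintype V] (E : V → V → Prop) (X Y : Set V) (k : ℕ)
    (hmin : ∀ S', IsSep E X Y S' → k ≤ S'.ncard)
    (S T : Set V) (hS : IsSep E X Y S) (hT : IsSep E X Y T)
    (hSk : S.ncard = k) (hTk : T.ncard = k)
    (hmax : ∀ S', IsSep E X Y S' → S'.ncard = k →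
      (RSet E S' X).ncard ≤ (RSet E T X).ncard) :
    RSet E S X ⊆ RSet E T X := by
  set A := RSet E S X with hA
  set B := RSet E T X with hB
  have hBA_S : Border E A ⊆ S := border_subset_sep hS
  have hBB_T : Border E B ⊆ T := border_subset_sep hT
  have hPsub : Border E (A ∪ B) ⊆ Border E A ∪ Border E B := by
    rintro v ⟨hv, u, hu, he⟩
    rcases hu with hu | hu
    · exact Or.inl ⟨fun h => hv (Or.inl h), u, hu, he⟩
    · exact Or.inr ⟨fun h => hv (Or.inr h), u, hu, he⟩
  have hQsub : Border E (A ∩ B) ⊆ Border E A ∪ Border E B := by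
    rintro v ⟨hv, u, hu, he⟩
    by_cases hvA : v ∈ A
    · exact Or.inr ⟨fun h => hv ⟨hvA, h⟩, u, hu.2, he⟩
    · exact Or.inl ⟨hvA, u, hu.1, he⟩
  have hPQ : Border E (A ∪ B) ∩ Border E (A ∩ B) ⊆ Border E A ∩ Border E B := by
    rintro v ⟨⟨hv1, _⟩, hv2, u, hu, he⟩
    exact ⟨⟨fun h => hv1 (Or.inl h), u, hu.1, he⟩, ⟨fun h => hv1 (Or.inr h), u, hu.2, he⟩⟩
  -- P and Q are separators
  have hXA : X ⊆ A := subset_RSet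
  have hXB : X ⊆ B := subset_RSet
  have hAY : A ∩ Y = ∅ := RSet_inter_Y hS
  have hBY : B ∩ Y = ∅ := RSet_inter_Y hT
  have hSY : S ∩ Y = ∅ := sep_inter_Y hS
  have hTY : T ∩ Y = ∅ := sep_inter_Y hT
  have hunionY : (A ∪ B) ∩ Y = ∅ := by
    rw [Set.eq_empty_iff_forall_notMem] at hAY hBY ⊢
    rintro v ⟨hv | hv, hy⟩
    exacts [hAY v ⟨hv, hy⟩, hBY v ⟨hv, hy⟩]
  have hinterY : (A ∩ B) ∩ Y = ∅ := by
    rw [Set.eq_empty_iff_forall_notMem] at hAY ⊢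
    rintro v ⟨hv, hy⟩; exact hAY v ⟨hv.1, hy⟩
  have hborderY : ∀ {R : Set V}, Border E R ⊆ Border E A ∪ Border E B → Border E R ∩ Y = ∅ := by
    intro R hsub
    rw [Set.eq_empty_iff_forall_notMem] at hSY hTY ⊢
    rintro v ⟨hv, hy⟩
    rcases hsub hv with h | h
    exacts [hSY v ⟨hBA_S h, hy⟩, hTY v ⟨hBB_T h, hy⟩]
  have hPsep : IsSep E X Y (Border E (A ∪ B)) :=
    border_isSep (fun x hx => Or.inl (hXA hx)) hunionY (hborderY hPsub)
  have hQsep : IsSep E X Y (Border E (A ∩ B)) :=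
    border_isSep (fun x hx => ⟨hXA hx, hXB hx⟩) hinterY (hborderY hQsub)
  -- submodular counting
  have hcard : (Border E (A ∪ B)).ncard + (Border E (A ∩ B)).ncard ≤ k + k := by
    have e1 := Set.ncard_union_add_ncard_inter (Border E (A ∪ B)) (Border E (A ∩ B))
      (Set.toFinite _) (Set.toFinite _)
    have e2 := Set.ncard_union_add_ncard_inter (Border E A) (Border E B)
      (Set.toFinite _) (Set.toFinite _)
    have l1 : (Border E (A ∪ B) ∪ Border E (A ∩ B)).ncard ≤ (Border E A ∪ Border E B).ncard :=
      Set.ncard_le_ncard (Set.union_subset hPsub hQsub) (Set.toFinite _)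
    have l2 : (Border E (A ∪ B) ∩ Border E (A ∩ B)).ncard ≤ (Border E A ∩ Border E B).ncard :=
      Set.ncard_le_ncard hPQ (Set.toFinite _)
    have l3 : (Border E A).ncard ≤ k := hSk ▸ Set.ncard_le_ncard hBA_S (Set.toFinite _)
    have l4 : (Border E B).ncard ≤ k := hTk ▸ Set.ncard_le_ncard hBB_T (Set.toFinite _)
    omega
  have hPk : (Border E (A ∪ B)).ncard = k := by
    have := hmin _ hPsep
    have := hmin _ hQsep
    omega
  -- A ∪ B reachable after removing P
  have hdisjP : ∀ v ∈ A ∪ B, v ∉ Border E (A ∪ B) := fun v hv hb => hb.1 hv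
  have hAsub : A ⊆ RSet E (Border E (A ∪ B)) X :=
    RSet_mono (fun v hv => hdisjP v (Or.inl hv))
  have hBsub : B ⊆ RSet E (Border E (A ∪ B)) X :=
    RSet_mono (fun v hv => hdisjP v (Or.inr hv))
  have hle : (RSet E (Border E (A ∪ B)) X).ncard ≤ B.ncard := hmax _ hPsep hPk
  have hEq : B = RSet E (Border E (A ∪ B)) X :=
    Set.eq_of_subset_of_ncard_le hBsub hle (Set.toFinite _)
  intro v hv
  have hv' := hAsub hv
  rw [← hEq] at hv'
  exact hv'

lemma sep_eq_border [Fintype V] {E : V → V → Prop} {X Y S : Set V}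
    (hS : IsSep E X Y S) (hmin : ∀ S', IsSep E X Y S' → S.ncard ≤ S'.ncard) :
    S = Border E (RSet E S X) := by
  have hsub : Border E (RSet E S X) ⊆ S := border_subset_sep hS
  have hsep' : IsSep E X Y (Border E (RSet E S X)) := by
    refine border_isSep subset_RSet (RSet_inter_Y hS) ?_
    have hSY := sep_inter_Y hS
    rw [Set.eq_empty_iff_forall_notMem] at hSY ⊢
    rintro v ⟨hv, hy⟩; exact hSY v ⟨hsub hv, hy⟩
  exact (Set.eq_of_subset_of_ncard_le hsub (hmin _ hsep') (Set.toFinite _)).symm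


theorem unique_min_separator_with_maximal_reach [Fintype V]
    (E : V → V → Prop) (X Y : Set V)
    (hX : X.Nonempty) (hY : Y.Nonempty) (hXY : Disjoint X Y)
    (hex : ∃ S, IsSep E X Y S) :
    ∃! Sstar : Set V, IsSep E X Y Sstar ∧
      (∀ S, IsSep E X Y S → Sstar.ncard ≤ S.ncard) ∧
      (∀ S, IsSep E X Y S → S.ncard = Sstar.ncard → RSet E S X ⊆ RSet E Sstar X) := by
  classical
  obtain ⟨S₀, hS₀⟩ := hex
  set k := sInf {n | ∃ S, IsSep E X Y S ∧ S.ncard = n} with hk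
  have hknonempty : {n | ∃ S, IsSep E X Y S ∧ S.ncard = n}.Nonempty := ⟨S₀.ncard, S₀, hS₀, rfl⟩
  have hkmin : ∀ S, IsSep E X Y S → k ≤ S.ncard := fun S h => Nat.sInf_le ⟨S, h, rfl⟩
  set M := {n | ∃ S, IsSep E X Y S ∧ S.ncard = k ∧ (RSet E S X).ncard = n} with hM
  have hMne : M.Nonempty := by
    obtain ⟨S, hS, hSk⟩ := Nat.sInf_mem hknonempty
    exact ⟨(RSet E S X).ncard, S, hS, hSk, rfl⟩
  have hMbdd : BddAbove M := by
    refine ⟨Fintype.card V, ?_⟩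
    rintro n ⟨S, _, _, rfl⟩
    simpa [Set.ncard_univ, Nat.card_eq_fintype_card] using Set.ncard_le_ncard (Set.subset_univ (RSet E S X)) (Set.toFinite _)
  obtain ⟨Sstar, hstar, hstark, hstarR⟩ := Nat.sSup_mem hMne hMbdd
  have hmax : ∀ S', IsSep E X Y S' → S'.ncard = k →
      (RSet E S' X).ncard ≤ (RSet E Sstar X).ncard := by
    intro S' h1 h2
    rw [hstarR]
    exact le_csSup hMbdd ⟨S', h1, h2, rfl⟩
  refine ⟨Sstar, ⟨hstar, fun S h => hstark ▸ hkmin S h, ?_⟩, ?_⟩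
  · intro S hS hcard
    exact key_lemma E X Y k hkmin S Sstar hS hstar (hcard.trans hstark) hstark hmax
  · rintro S₁ ⟨h1, h2, h3⟩
    have hk1 : S₁.ncard = k := le_antisymm (hstark ▸ h2 Sstar hstar) (hkmin S₁ h1)
    have hcc : S₁.ncard = Sstar.ncard := hk1.trans hstark.symm
    have r1 : RSet E S₁ X ⊆ RSet E Sstar X :=
      key_lemma E X Y k hkmin S₁ Sstar h1 hstar hk1 hstark hmax
    have r2 : RSet E Sstar X ⊆ RSet E S₁ X := h3 Sstar hstar hcc.symm
    have hR : RSet E S₁ X = RSet E Sstar X := Set.Subset.antisymm r1 r2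
    have e1 : S₁ = Border E (RSet E S₁ X) :=
      sep_eq_border h1 (fun S' hS' => hk1 ▸ hkmin S' hS')
    have e2 : Sstar = Border E (RSet E Sstar X) :=
      sep_eq_border hstar (fun S' hS' => hstark ▸ hkmin S' hS')
    rw [e1, e2, hR]
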